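/- Let f : [0,∞)×{1,…,n} → ℝ be cadlag with nonnegative jumps and Pitman ordered: f_{i}(y) ≤ f_{i-1}(y⁻) for all i = 2,…,n and y ≥ 0, with convention f(0⁻)=0. Then for every k ≤ n and y ≥ 0, the multi-point last passage value from (0,n)^k to (y,1)^k equals f_1(y) + … + f_k(y), achieved by the disjoint k-tuple of leftmost paths following the top k lines. -/

import Mathlib

open Filter Set

/-- Left limit with the convention `f(0⁻) = 0`. -/
noncomputable def lml (f : ℝ → ℝ) (z : ℝ) : ℝ := if z ≤ 0 then 0 else Function.leftLim f z

/-- Cadlag on `[0, ∞)`: right-continuous at every `x ≥ 0`, left limits exist at every `x > 0`. -/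
def Cadlag (f : ℝ → ℝ) : Prop :=
  (∀ x : ℝ, 0 ≤ x → ContinuousWithinAt f (Set.Ici x) x) ∧
  (∀ x : ℝ, 0 < x → ∃ l : ℝ, Filter.Tendsto f (nhdsWithin x (Set.Iio x)) (nhds l))

/-- All jumps are nonnegative (with the convention `f(0⁻) = 0`). -/
def NonnegJumps (f : ℝ → ℝ) : Prop := ∀ z : ℝ, 0 ≤ z → lml f z ≤ f z

/-- `S f₁ f₂ x y = sup_{z ∈ [x,y]} (f₂ z - f₁ (z⁻))`. -/
noncomputable def S (f₁ f₂ : ℝ → ℝ) (x y : ℝ) : ℝ :=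
  sSup ((fun z => f₂ z - lml f₁ z) '' Set.Icc x y)

/-- `Sm f₁ f₂ x y = sup_{z ∈ [x,y)} (f₂ z - f₁ (z⁻))`. -/
noncomputable def Sm (f₁ f₂ : ℝ → ℝ) (x y : ℝ) : ℝ :=
  sSup ((fun z => f₂ z - lml f₁ z) '' Set.Ico x y)

/-- Jump times of an ordered, essentially disjoint `k`-tuple of paths from `(0,n)` to `(y,1)`.
Path `j` occupies line `i ∈ {1,…,n}` on the interval `[t j i, t j (i-1)]`. -/
def IsTuple (n k : ℕ) (y : ℝ) (t : Fin k → ℕ → ℝ) : Prop :=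
  (∀ j, t j n = 0) ∧ (∀ j, t j 0 = y) ∧
  (∀ j, ∀ i : ℕ, i < n → t j (i + 1) ≤ t j i) ∧
  (∀ j : Fin k, ∀ hj : j.val + 1 < k, ∀ i : ℕ, i < n →
    t j i ≤ t ⟨j.val + 1, hj⟩ (i + 1))

/-- The measure `df` of the union of the paths of a disjoint `k`-tuple: on each line the raw
sum of increments, corrected by subtracting atoms shared by consecutive touching paths. -/
noncomputable def unionLen (f : ℕ → ℝ → ℝ) (n k : ℕ) (t : Fin k → ℕ → ℝ) : ℝ :=
  ∑ i ∈ Finset.Icc 1 n,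
    ((∑ j : Fin k, (f i (t j (i - 1)) - lml (f i) (t j i)))
      - ∑ j : Fin k, (if hj : j.val + 1 < k then
          (if t j (i - 1) = t ⟨j.val + 1, hj⟩ i then
            f i (t j (i - 1)) - lml (f i) (t j (i - 1)) else 0)
        else 0))

private lemma lml_zero (g : ℝ → ℝ) : lml g 0 = 0 := by simp [lml]

private lemma sum_Icc_one' (n : ℕ) (φ : ℕ → ℝ) :
    ∑ i ∈ Finset.Icc 1 n, φ i = ∑ r ∈ Finset.range n, φ (r + 1) := by
  rw [← Finset.Ico_add_one_right_eq_Icc, Finset.sum_Ico_eq_sum_range]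
  simp [Nat.add_comm]

private lemma telescope (n : ℕ) (hn : 0 < n) (a w : ℕ → ℝ) (hwn : w n = 0) :
    ∑ r ∈ Finset.range n, (a r - w (r + 1))
      = a 0 + ∑ r ∈ Finset.Ico 1 n, (a r - w r) := by
  have h1 : ∑ r ∈ Finset.range n, (a r - w (r + 1))
      = ∑ r ∈ Finset.range n, a r - ∑ r ∈ Finset.range n, w (r + 1) :=
    Finset.sum_sub_distrib _ _
  have h2 := Finset.sum_range_succ' w n
  have h3 := Finset.sum_range_succ w n
  have h4 : ∑ r ∈ Finset.range n, a r = a 0 + ∑ r ∈ Finset.Ico 1 n, a r := by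
    rw [Finset.range_eq_Ico, Finset.sum_eq_sum_Ico_succ_bot hn]
  have h5 : ∑ r ∈ Finset.range n, w r = w 0 + ∑ r ∈ Finset.Ico 1 n, w r := by
    rw [Finset.range_eq_Ico, Finset.sum_eq_sum_Ico_succ_bot hn]
  have h6 : ∑ r ∈ Finset.Ico 1 n, (a r - w r)
      = ∑ r ∈ Finset.Ico 1 n, a r - ∑ r ∈ Finset.Ico 1 n, w r := Finset.sum_sub_distrib _ _
  rw [hwn] at h3
  rw [h1, h4, h6]
  linarith

private lemma shift_sum (g l : ℕ → ℝ) (m : ℕ) :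
    g 1 + ∑ r ∈ Finset.Ico 1 (m + 1), (g (r + 1) - l r)
      = g (m + 1) + ∑ r ∈ Finset.Ico 1 (m + 1), (g r - l r) := by
  induction m with
  | zero => simp
  | succ m ih =>
    have e1 := Finset.sum_Ico_succ_top (by omega : 1 ≤ m + 1) (fun r => g (r + 1) - l r)
    have e2 := Finset.sum_Ico_succ_top (by omega : 1 ≤ m + 1) (fun r => g r - l r)
    rw [e1, e2]
    linarith

private lemma reindexE (k : ℕ) (hk : 1 ≤ k) (E : ℕ → ℝ) (hE0 : E 0 = 0) :
    ∑ m ∈ Finset.range k, E m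
      = ∑ m ∈ Finset.range k, (if m + 1 < k then E (m + 1) else 0) := by
  obtain ⟨K, rfl⟩ : ∃ K, k = K + 1 := ⟨k - 1, by omega⟩
  rw [Finset.sum_range_succ' E K, Finset.sum_range_succ]
  rw [if_neg (by omega), hE0]
  rw [Finset.sum_congr rfl (fun m hm => if_pos (by simp at hm; omega))]

theorem stmt17 (n k : ℕ) (hk1 : 1 ≤ k) (hkn : k ≤ n)
    (f : ℕ → ℝ → ℝ)
    (hcad : ∀ i : ℕ, 1 ≤ i → i ≤ n → Cadlag (f i))
    (hjmp : ∀ i : ℕ, 1 ≤ i → i ≤ n → NonnegJumps (f i))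
    (hord : ∀ i : ℕ, 2 ≤ i → i ≤ n → ∀ z : ℝ, 0 ≤ z → f i z ≤ lml (f (i - 1)) z)
    (y : ℝ) (hy : 0 ≤ y) :
    IsGreatest {v : ℝ | ∃ t : Fin k → ℕ → ℝ, IsTuple n k y t ∧ v = unionLen f n k t}
      (∑ i ∈ Finset.Icc 1 k, f i y) ∧
    IsTuple n k y (fun j i => if j.val + 1 ≤ i then 0 else y) ∧
    unionLen f n k (fun j i => if j.val + 1 ≤ i then 0 else y)
      = ∑ i ∈ Finset.Icc 1 k, f i y := by
  have hn1 : 1 ≤ n := le_trans hk1 hkn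
  have hf0 : ∀ m : ℕ, 2 ≤ m → m ≤ n → f m 0 = 0 := by
    intro m h2 hm
    have ha := hord m h2 hm 0 le_rfl
    have hb := hjmp m (by omega) hm 0 le_rfl
    rw [lml_zero] at ha hb
    linarith
  -- generic tuple facts
  have tmono : ∀ t : Fin k → ℕ → ℝ, IsTuple n k y t → ∀ j : Fin k, ∀ a b : ℕ,
      a ≤ b → b ≤ n → t j b ≤ t j a := by
    intro t ht j a b hab hbn
    induction b with
    | zero =>
      have : a = 0 := by omega
      subst this; exact le_rfl
    | succ b ih =>
      rcases Nat.lt_or_ge a (b + 1) with h | h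
      · exact le_trans (ht.2.2.1 j b (by omega)) (ih (by omega) (by omega))
      · have : a = b + 1 := by omega
        subst this; exact le_rfl
  have tnn : ∀ t : Fin k → ℕ → ℝ, IsTuple n k y t → ∀ j : Fin k, ∀ i : ℕ,
      i ≤ n → 0 ≤ t j i := by
    intro t ht j i hi
    have h := tmono t ht j i n hi le_rfl
    rw [ht.1 j] at h
    linarith
  have thi : ∀ t : Fin k → ℕ → ℝ, IsTuple n k y t → ∀ i : ℕ, ∀ j : Fin k,
      i ≤ j.val → t j i = y := by
    intro t ht i
    induction i with
    | zero => exact fun j _ => ht.2.1 j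
    | succ i ih =>
      intro j hij
      have hjk : j.val < k := j.isLt
      have hup : t j (i + 1) ≤ y := by
        have h := tmono t ht j 0 (i + 1) (Nat.zero_le _) (by omega)
        rw [ht.2.1 j] at h
        exact h
      have hb : j.val - 1 < k := by omega
      have hj' : (⟨j.val - 1, hb⟩ : Fin k).val + 1 < k := by
        simp only []
        omega
      have h4 := ht.2.2.2 ⟨j.val - 1, hb⟩ hj' i (by omega)
      have e : (⟨(⟨j.val - 1, hb⟩ : Fin k).val + 1, hj'⟩ : Fin k) = j := by
        apply Fin.ext
        simp only []
        omega
      rw [e] at h4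
      rw [ih ⟨j.val - 1, hb⟩ (show i ≤ j.val - 1 by omega)] at h4
      linarith
  set E : ℕ → ℝ := fun m => ∑ r ∈ Finset.Ico 1 (m + 1), (f r y - lml (f r) y) with hE
  have hE0 : E 0 = 0 := by simp [hE]
  -- decomposition of the raw sum of one path
  have decomp : ∀ t : Fin k → ℕ → ℝ, IsTuple n k y t → ∀ j : Fin k,
      ∑ i ∈ Finset.Icc 1 n, (f i (t j (i - 1)) - lml (f i) (t j i))
        = f (j.val + 1) y + E j.val
          + ∑ r ∈ Finset.Ico (j.val + 1) n, (f (r + 1) (t j r) - lml (f r) (t j r)) := by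
    intro t ht j
    have h1 : ∑ i ∈ Finset.Icc 1 n, (f i (t j (i - 1)) - lml (f i) (t j i))
        = ∑ r ∈ Finset.range n,
            (f (r + 1) (t j r) - lml (f (r + 1)) (t j (r + 1))) := by
      rw [sum_Icc_one']
      exact Finset.sum_congr rfl (fun r _ => by simp)
    rw [h1, telescope n (by omega) (fun r => f (r + 1) (t j r))
      (fun m => lml (f m) (t j m)) (by simp [ht.1 j, lml_zero])]
    rw [ht.2.1 j]
    rw [← Finset.sum_Ico_consecutive _ (by omega : 1 ≤ j.val + 1) (by omega : j.val + 1 ≤ n)]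
    have h2 : ∑ r ∈ Finset.Ico 1 (j.val + 1), (f (r + 1) (t j r) - lml (f r) (t j r))
        = ∑ r ∈ Finset.Ico 1 (j.val + 1), (f (r + 1) y - lml (f r) y) := by
      apply Finset.sum_congr rfl
      intro r hr
      simp only [Finset.mem_Ico] at hr
      rw [thi t ht r j (by omega)]
    rw [h2]
    have h3 := shift_sum (fun r => f r y) (fun r => lml (f r) y) j.val
    have hEval : E j.val = ∑ r ∈ Finset.Ico 1 (j.val + 1), (f r y - lml (f r) y) := rfl
    rw [hEval]
    linarith
  -- correction sums: lower bound for general tuples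
  have corr_ge : ∀ t : Fin k → ℕ → ℝ, IsTuple n k y t → ∀ j : Fin k,
      (if j.val + 1 < k then E (j.val + 1) else 0)
        ≤ ∑ i ∈ Finset.Icc 1 n, (if hj : j.val + 1 < k then
            (if t j (i - 1) = t ⟨j.val + 1, hj⟩ i then
              f i (t j (i - 1)) - lml (f i) (t j (i - 1)) else 0)
          else 0) := by
    intro t ht j
    by_cases hj : j.val + 1 < k
    · rw [if_pos hj]
      rw [Finset.sum_congr rfl (fun i (_ : i ∈ Finset.Icc 1 n) => dif_pos hj)]
      rw [← Finset.Ico_add_one_right_eq_Icc]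
      rw [← Finset.sum_Ico_consecutive _ (by omega : 1 ≤ j.val + 2)
        (by omega : j.val + 2 ≤ n + 1)]
      have hfirst : ∑ i ∈ Finset.Ico 1 (j.val + 2), (if t j (i - 1) = t ⟨j.val + 1, hj⟩ i then
              f i (t j (i - 1)) - lml (f i) (t j (i - 1)) else 0)
          = E (j.val + 1) := by
        have hEval : E (j.val + 1) = ∑ r ∈ Finset.Ico 1 (j.val + 2), (f r y - lml (f r) y) := rfl
        rw [hEval]
        apply Finset.sum_congr rfl
        intro i hi
        simp only [Finset.mem_Ico] at hi
        have e1 : t j (i - 1) = y := thi t ht (i - 1) j (by omega)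
        have e2 : t ⟨j.val + 1, hj⟩ i = y :=
          thi t ht i ⟨j.val + 1, hj⟩ (show i ≤ j.val + 1 by omega)
        rw [e1, e2, if_pos rfl]
      have hsecond : 0 ≤ ∑ i ∈ Finset.Ico (j.val + 2) (n + 1),
          (if t j (i - 1) = t ⟨j.val + 1, hj⟩ i then
            f i (t j (i - 1)) - lml (f i) (t j (i - 1)) else 0) := by
        apply Finset.sum_nonneg
        intro i hi
        simp only [Finset.mem_Ico] at hi
        split
        · have hz : 0 ≤ t j (i - 1) := tnn t ht j (i - 1) (by omega)
          exact sub_nonneg.mpr (hjmp i (by omega) (by omega) _ hz)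
        · exact le_rfl
      linarith
    · rw [if_neg hj]
      apply le_of_eq
      symm
      apply Finset.sum_eq_zero
      intro i _
      rw [dif_neg hj]
  -- swap the order of summation in unionLen
  have swap : ∀ t : Fin k → ℕ → ℝ, unionLen f n k t
      = (∑ j : Fin k, ∑ i ∈ Finset.Icc 1 n, (f i (t j (i - 1)) - lml (f i) (t j i)))
        - ∑ j : Fin k, ∑ i ∈ Finset.Icc 1 n, (if hj : j.val + 1 < k then
            (if t j (i - 1) = t ⟨j.val + 1, hj⟩ i then
              f i (t j (i - 1)) - lml (f i) (t j (i - 1)) else 0)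
          else 0) := by
    intro t
    unfold unionLen
    rw [Finset.sum_sub_distrib]
    congr 1
    · exact Finset.sum_comm
    · exact Finset.sum_comm
  -- the key sum identity for the main term
  have hsum1 : ∑ j : Fin k, (f (j.val + 1) y + E j.val)
      = ∑ i ∈ Finset.Icc 1 k, f i y
        + ∑ j : Fin k, (if j.val + 1 < k then E (j.val + 1) else 0) := by
    rw [Finset.sum_add_distrib]
    congr 1
    · rw [Fin.sum_univ_eq_sum_range (fun m => f (m + 1) y) k, ← sum_Icc_one' k (fun i => f i y)]
    · rw [Fin.sum_univ_eq_sum_range (fun m => E m) k,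
        Fin.sum_univ_eq_sum_range (fun m => if m + 1 < k then E (m + 1) else 0) k]
      exact reindexE k hk1 E hE0
  -- the leftmost tuple
  have ht0 : IsTuple n k y (fun j i => if j.val + 1 ≤ i then 0 else y) := by
    refine ⟨?_, ?_, ?_, ?_⟩
    · intro j
      show (if j.val + 1 ≤ n then (0:ℝ) else y) = 0
      rw [if_pos (show j.val + 1 ≤ n by have := j.isLt; omega)]
    · intro j
      show (if j.val + 1 ≤ 0 then (0:ℝ) else y) = y
      rw [if_neg (by omega)]
    · intro j i _
      show (if j.val + 1 ≤ i + 1 then (0:ℝ) else y) ≤ (if j.val + 1 ≤ i then (0:ℝ) else y)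
      split_ifs with h1 h2
      · exact le_rfl
      · exact hy
      · omega
      · exact le_rfl
    · intro j hj i _
      show (if j.val + 1 ≤ i then (0:ℝ) else y) ≤ (if j.val + 1 + 1 ≤ i + 1 then (0:ℝ) else y)
      split_ifs with h1 h2
      · exact le_rfl
      · omega
      · omega
      · exact le_rfl
  -- equality for the leftmost tuple
  have heq : unionLen f n k (fun j i => if j.val + 1 ≤ i then 0 else y)
      = ∑ i ∈ Finset.Icc 1 k, f i y := by
    set t0 : Fin k → ℕ → ℝ := fun j i => if j.val + 1 ≤ i then 0 else y with ht0def
    have hRj : ∀ j : Fin k, ∑ i ∈ Finset.Icc 1 n, (f i (t0 j (i - 1)) - lml (f i) (t0 j i))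
        = f (j.val + 1) y + E j.val := by
      intro j
      rw [decomp t0 ht0 j]
      have hz : ∑ r ∈ Finset.Ico (j.val + 1) n, (f (r + 1) (t0 j r) - lml (f r) (t0 j r)) = 0 := by
        apply Finset.sum_eq_zero
        intro r hr
        simp only [Finset.mem_Ico] at hr
        have e : t0 j r = 0 := if_pos (by omega)
        rw [e, lml_zero, hf0 (r + 1) (by omega) (by omega)]
        ring
      rw [hz]
      ring
    have hCj : ∀ j : Fin k, ∑ i ∈ Finset.Icc 1 n, (if hj : j.val + 1 < k then
          (if t0 j (i - 1) = t0 ⟨j.val + 1, hj⟩ i then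
            f i (t0 j (i - 1)) - lml (f i) (t0 j (i - 1)) else 0)
        else 0) = (if j.val + 1 < k then E (j.val + 1) else 0) := by
      intro j
      by_cases hj : j.val + 1 < k
      · rw [if_pos hj]
        rw [Finset.sum_congr rfl (fun i (_ : i ∈ Finset.Icc 1 n) => dif_pos hj)]
        rw [← Finset.Ico_add_one_right_eq_Icc]
        rw [← Finset.sum_Ico_consecutive _ (by omega : 1 ≤ j.val + 2)
          (by omega : j.val + 2 ≤ n + 1)]
        have hfirst : ∑ i ∈ Finset.Ico 1 (j.val + 2), (if t0 j (i - 1) = t0 ⟨j.val + 1, hj⟩ i then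
                f i (t0 j (i - 1)) - lml (f i) (t0 j (i - 1)) else 0)
            = E (j.val + 1) := by
          have hEval : E (j.val + 1)
              = ∑ r ∈ Finset.Ico 1 (j.val + 2), (f r y - lml (f r) y) := rfl
          rw [hEval]
          apply Finset.sum_congr rfl
          intro i hi
          simp only [Finset.mem_Ico] at hi
          have e1 : t0 j (i - 1) = y := thi t0 ht0 (i - 1) j (by omega)
          have e2 : t0 ⟨j.val + 1, hj⟩ i = y :=
            thi t0 ht0 i ⟨j.val + 1, hj⟩ (show i ≤ j.val + 1 by omega)
          rw [e1, e2, if_pos rfl]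
        have hsecond : ∑ i ∈ Finset.Ico (j.val + 2) (n + 1),
            (if t0 j (i - 1) = t0 ⟨j.val + 1, hj⟩ i then
              f i (t0 j (i - 1)) - lml (f i) (t0 j (i - 1)) else 0) = 0 := by
          apply Finset.sum_eq_zero
          intro i hi
          simp only [Finset.mem_Ico] at hi
          have e1 : t0 j (i - 1) = 0 := if_pos (by omega)
          have e2 : t0 ⟨j.val + 1, hj⟩ i = 0 := if_pos (show j.val + 1 + 1 ≤ i by omega)
          rw [e1, e2, if_pos rfl, lml_zero, hf0 i (by omega) (by omega)]
          ring
        rw [hfirst, hsecond]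
        ring
      · rw [if_neg hj]
        apply Finset.sum_eq_zero
        intro i _
        rw [dif_neg hj]
    rw [swap t0]
    rw [Finset.sum_congr rfl (fun j (_ : j ∈ Finset.univ) => hRj j),
      Finset.sum_congr rfl (fun j (_ : j ∈ Finset.univ) => hCj j)]
    rw [hsum1]
    ring
  refine ⟨⟨⟨fun j i => if j.val + 1 ≤ i then 0 else y, ht0, heq.symm⟩, ?_⟩, ht0, heq⟩
  rintro v ⟨t, ht, rfl⟩
  rw [swap t]
  have hA : ∑ j : Fin k, ∑ i ∈ Finset.Icc 1 n, (f i (t j (i - 1)) - lml (f i) (t j i))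
      ≤ ∑ j : Fin k, (f (j.val + 1) y + E j.val) := by
    apply Finset.sum_le_sum
    intro j _
    rw [decomp t ht j]
    have hrem : ∑ r ∈ Finset.Ico (j.val + 1) n, (f (r + 1) (t j r) - lml (f r) (t j r)) ≤ 0 := by
      apply Finset.sum_nonpos
      intro r hr
      simp only [Finset.mem_Ico] at hr
      have h0 : 0 ≤ t j r := tnn t ht j r (by omega)
      have h := hord (r + 1) (by omega) (by omega) (t j r) h0
      simp only [Nat.add_sub_cancel] at h
      linarith
    linarith
  have hB : ∑ j : Fin k, (if j.val + 1 < k then E (j.val + 1) else 0)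
      ≤ ∑ j : Fin k, ∑ i ∈ Finset.Icc 1 n, (if hj : j.val + 1 < k then
          (if t j (i - 1) = t ⟨j.val + 1, hj⟩ i then
            f i (t j (i - 1)) - lml (f i) (t j (i - 1)) else 0)
        else 0) := Finset.sum_le_sum (fun j _ => corr_ge t ht j)
  rw [hsum1] at hA
  linarith
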